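/- arXiv:2012.07195 — 5 statements merged into one kernel-verified Lean document; each statement's English description precedes it below -/
import Mathlib

section
/- (Theorem 1, piecewise linearity of the provider's commitment value.) Suppose there exists p̄ ≥ 0 such that for every p ∈ [0, p̄] the feasible set S(p) is nonempty, and the objective set {c · x : x ∈ S(0)} is bounded above. Then v is piecewise linear on [0, p̄]: there exist n ≥ 1, points 0 = t_0 ≤ t_1 ≤ ⋯ ≤ t_n = p̄, and reals α_j, β_j such that v(p) = α_j · p + β_j for all p ∈ [t_{j−1}, t_j] and each j = 1, …, n. -/
open Matrix

/-- Feasible set of the provider's commitment-constrained LP. -/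
def feasibleSet {m n : ℕ} (A : Matrix (Fin m) (Fin n) ℝ) (b : Fin m → ℝ)
    (d : Fin n → ℝ) (p : ℝ) : Set (Fin n → ℝ) :=
  {x | 0 ≤ x ∧ A.mulVec x = b ∧ d ⬝ᵥ x ≥ p}

/-- The provider's commitment value. -/
noncomputable def commitValue {m n : ℕ} (A : Matrix (Fin m) (Fin n) ℝ) (b : Fin m → ℝ)
    (c d : Fin n → ℝ) (p : ℝ) : ℝ :=
  sSup ((fun x => c ⬝ᵥ x) '' feasibleSet A b d p)

lemma exists_mul_le {ι : Type} [Fintype ι] (a c : ι → ℝ) :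
    (∃ t : ℝ, ∀ i, a i * t ≤ c i) ↔
      ((∀ i, a i = 0 → 0 ≤ c i) ∧
       (∀ i j, 0 < a i → a j < 0 → 0 ≤ c i / a i - c j / a j)) := by
  constructor
  · rintro ⟨t, ht⟩
    refine ⟨fun i h => by have := ht i; rw [h] at this; linarith, fun i j hi hj => ?_⟩
    have h1 : t ≤ c i / a i := (le_div_iff₀ hi).2 (by have := ht i; linarith [ht i])
    have h2 : c j / a j ≤ t := by
      rw [div_le_iff_of_neg hj]
      have := ht j; linarith
    linarith
  · rintro ⟨h0, hpn⟩
    by_cases hL : (Finset.univ.filter (fun j => a j < 0)).Nonempty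
    · refine ⟨(Finset.univ.filter (fun j => a j < 0)).sup' hL (fun j => c j / a j), fun i => ?_⟩
      rcases lt_trichotomy (a i) 0 with h | h | h
      · have hmem : i ∈ Finset.univ.filter (fun j => a j < 0) := by simp [h]
        have h3 : c i / a i ≤ (Finset.univ.filter (fun j => a j < 0)).sup' hL (fun j => c j / a j) :=
          Finset.le_sup' (fun j => c j / a j) hmem
        calc a i * _ ≤ a i * (c i / a i) := mul_le_mul_of_nonpos_left h3 (le_of_lt h)
          _ = c i := by rw [mul_comm]; exact div_mul_cancel₀ _ (ne_of_lt h)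
      · rw [h, zero_mul]; exact h0 i h
      · have hub : (Finset.univ.filter (fun j => a j < 0)).sup' hL (fun j => c j / a j) ≤ c i / a i := by
          apply Finset.sup'_le
          intro j hj
          have hj' := (Finset.mem_filter.1 hj).2
          have := hpn i j h hj'
          linarith
        calc a i * _ ≤ a i * (c i / a i) := mul_le_mul_of_nonneg_left hub (le_of_lt h)
          _ = c i := by rw [mul_comm]; exact div_mul_cancel₀ _ (ne_of_gt h)
    · by_cases hU : (Finset.univ.filter (fun j => 0 < a j)).Nonempty
      · refine ⟨(Finset.univ.filter (fun j => 0 < a j)).inf' hU (fun j => c j / a j), fun i => ?_⟩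
        rcases lt_trichotomy (a i) 0 with h | h | h
        · exact absurd ⟨i, by simp [h]⟩ hL
        · rw [h, zero_mul]; exact h0 i h
        · have hmem : i ∈ Finset.univ.filter (fun j => 0 < a j) := by simp [h]
          have h3 : (Finset.univ.filter (fun j => 0 < a j)).inf' hU (fun j => c j / a j) ≤ c i / a i :=
            Finset.inf'_le (fun j => c j / a j) hmem
          calc a i * _ ≤ a i * (c i / a i) := mul_le_mul_of_nonneg_left h3 (le_of_lt h)
            _ = c i := by rw [mul_comm]; exact div_mul_cancel₀ _ (ne_of_gt h)
      · refine ⟨0, fun i => ?_⟩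
        have h1 : ¬ a i < 0 := fun h => hL ⟨i, by simp [h]⟩
        have h2 : ¬ 0 < a i := fun h => hU ⟨i, by simp [h]⟩
        have h3 : a i = 0 := by linarith
        rw [h3, zero_mul]; exact h0 i h3

lemma fourier_motzkin (dim : ℕ) :
    ∀ (ι : Type) [Fintype ι] (g : ι → Fin dim → ℝ),
    ∃ (κ : Type) (_ : Fintype κ) (Λ : κ → ι → ℝ),
      (∀ k i, 0 ≤ Λ k i) ∧
      (∀ k, ∑ i, Λ k i • g i = 0) ∧
      (∀ φ : ι → ℝ, (∃ x, ∀ i, g i ⬝ᵥ x ≤ φ i) ↔ ∀ k, 0 ≤ ∑ i, Λ k i * φ i) := by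
  induction dim with
  | zero =>
    intro ι _ g
    classical
    refine ⟨ι, inferInstance, fun k i => if i = k then 1 else 0, ?_, ?_, ?_⟩
    · intro k i; by_cases hik : i = k <;> simp [hik]
    · intro k
      exact Subsingleton.elim _ _
    · intro φ
      have hd : ∀ (i : ι) (x : Fin 0 → ℝ), g i ⬝ᵥ x = 0 := by
        intro i x; simp [dotProduct]
      constructor
      · rintro ⟨x, hx⟩ k
        have := hx k
        rw [hd k x] at this
        simpa [Finset.sum_ite_eq'] using this
      · intro hk
        refine ⟨fun j => j.elim0, fun i => ?_⟩
        rw [hd i]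
        simpa [Finset.sum_ite_eq'] using hk i
  | succ d IH =>
    intro ι _ g
    classical
    set a : ι → ℝ := fun i => g i 0 with ha
    set h : ι → Fin d → ℝ := fun i => fun j => g i j.succ with hh
    -- multipliers for one-variable elimination
    set μ : (ι ⊕ ι × ι) → ι → ℝ := fun e =>
      Sum.elim
        (fun i₀ => fun i => if a i₀ = 0 ∧ i = i₀ then (1:ℝ) else 0)
        (fun q => fun i =>
          if 0 < a q.1 ∧ a q.2 < 0 then
            (if i = q.1 then 1 / a q.1 else 0) + (if i = q.2 then -(1 / a q.2) else 0)
          else 0) e with hμ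
    have μnonneg : ∀ e i, 0 ≤ μ e i := by
      rintro (i₀ | ⟨i₀, j₀⟩) i <;> simp only [hμ, Sum.elim_inl, Sum.elim_inr]
      · split <;> norm_num
      · split
        · rename_i hc
          obtain ⟨hp, hn⟩ := hc
          have h1 : (0:ℝ) ≤ if i = i₀ then 1 / a i₀ else 0 := by
            split
            · exact le_of_lt (div_pos one_pos hp)
            · exact le_rfl
          have h2 : (0:ℝ) ≤ if i = j₀ then -(1 / a j₀) else 0 := by
            split
            · have h3 : 1 / a j₀ < 0 := div_neg_of_pos_of_neg one_pos hn
              linarith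
            · exact le_rfl
          linarith
        · exact le_rfl
    -- linear combination operator
    set combo : (ι ⊕ ι × ι) → (ι → ℝ) → ℝ := fun e c => ∑ i, μ e i * c i with hcombo
    have combo_inl : ∀ (i₀ : ι) (c : ι → ℝ),
        combo (.inl i₀) c = if a i₀ = 0 then c i₀ else 0 := by
      intro i₀ c
      simp only [hcombo, hμ, Sum.elim_inl]
      by_cases hz : a i₀ = 0 <;> simp [hz, Finset.sum_ite_eq', ite_mul]
    have combo_inr : ∀ (i₀ j₀ : ι) (c : ι → ℝ),
        combo (.inr (i₀, j₀)) c =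
          if 0 < a i₀ ∧ a j₀ < 0 then c i₀ / a i₀ - c j₀ / a j₀ else 0 := by
      intro i₀ j₀ c
      have hne : (0 < a i₀ ∧ a j₀ < 0) → i₀ ≠ j₀ := by
        rintro ⟨h1, h2⟩ rfl; linarith
      simp only [hcombo, hμ, Sum.elim_inr]
      by_cases hc : 0 < a i₀ ∧ a j₀ < 0
      · have hij := hne hc
        simp only [hc.1, hc.2, and_self, if_true, add_mul, ite_mul, zero_mul]
        rw [Finset.sum_add_distrib]
        simp only [Finset.sum_ite_eq', Finset.mem_univ, if_true]
        ring
      · simp [hc]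
    have combo_a : ∀ e, combo e a = 0 := by
      rintro (i₀ | ⟨i₀, j₀⟩)
      · rw [combo_inl]
        split
        · rename_i hz; exact hz
        · rfl
      · rw [combo_inr]
        split
        · rename_i hc
          rw [div_self (ne_of_gt hc.1), div_self (ne_of_lt hc.2)]
          ring
        · rfl
    set G : (ι ⊕ ι × ι) → Fin d → ℝ := fun e => ∑ i, μ e i • h i with hG
    have Gdot : ∀ e (x : Fin d → ℝ), G e ⬝ᵥ x = combo e (fun i => h i ⬝ᵥ x) := by
      intro e x
      simp only [hG, hcombo, dotProduct, Finset.sum_apply, Pi.smul_apply, smul_eq_mul,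
        Finset.sum_mul, Finset.mul_sum, mul_assoc]
      rw [Finset.sum_comm]
    have combo_sub : ∀ e (c c' : ι → ℝ),
        combo e (fun i => c i - c' i) = combo e c - combo e c' := by
      intro e c c'
      simp [hcombo, mul_sub, Finset.sum_sub_distrib]
    have key : ∀ (φ : ι → ℝ) (x : Fin d → ℝ),
        (∃ t, ∀ i, a i * t + h i ⬝ᵥ x ≤ φ i) ↔ (∀ e, G e ⬝ᵥ x ≤ combo e φ) := by
      intro φ x
      set cv : ι → ℝ := fun i => φ i - h i ⬝ᵥ x with hcv
      have hGc : ∀ e, (0 ≤ combo e cv ↔ G e ⬝ᵥ x ≤ combo e φ) := by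
        intro e
        have h2 : combo e cv = combo e φ - combo e (fun i => h i ⬝ᵥ x) := combo_sub e φ _
        rw [h2, sub_nonneg, Gdot]
      have lhs : (∃ t, ∀ i, a i * t + h i ⬝ᵥ x ≤ φ i) ↔ (∃ t, ∀ i, a i * t ≤ cv i) := by
        constructor <;> rintro ⟨t, ht⟩ <;> refine ⟨t, fun i => ?_⟩ <;>
          have := ht i <;> simp only [hcv] at * <;> linarith
      rw [lhs, exists_mul_le]
      constructor
      · rintro ⟨h0, hpn⟩ e
        rw [← hGc e]
        rcases e with i₀ | ⟨i₀, j₀⟩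
        · rw [combo_inl]
          split
          · rename_i hz; exact h0 i₀ hz
          · exact le_rfl
        · rw [combo_inr]
          split
          · rename_i hc; exact hpn i₀ j₀ hc.1 hc.2
          · exact le_rfl
      · intro H
        constructor
        · intro i hz
          have := (hGc (.inl i)).2 (H (.inl i))
          rwa [combo_inl, if_pos hz] at this
        · intro i j hi hj
          have := (hGc (.inr (i, j))).2 (H (.inr (i, j)))
          rwa [combo_inr, if_pos ⟨hi, hj⟩] at this
    have split_x : ∀ (x : Fin (d+1) → ℝ) i,
        g i ⬝ᵥ x = a i * x 0 + h i ⬝ᵥ (fun j => x j.succ) := by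
      intro x i
      simp [dotProduct, Fin.sum_univ_succ, ha, hh]
    obtain ⟨κ, ftκ, Λ', hΛn, hΛz, hΛiff⟩ := IH (ι ⊕ ι × ι) G
    haveI := ftκ
    have swap : ∀ (k : κ) (w : ι → ℝ),
        ∑ i, (∑ e, Λ' k e * μ e i) * w i = ∑ e, Λ' k e * combo e w := by
      intro k w
      simp only [hcombo, Finset.sum_mul, Finset.mul_sum, mul_assoc]
      rw [Finset.sum_comm]
    refine ⟨κ, ftκ, fun k i => ∑ e, Λ' k e * μ e i, ?_, ?_, ?_⟩
    · intro k i
      exact Finset.sum_nonneg fun e _ => mul_nonneg (hΛn k e) (μnonneg e i)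
    · intro k
      funext j
      refine Fin.cases ?_ ?_ j
      · have h1 : ∑ i, (∑ e, Λ' k e * μ e i) * a i = 0 := by
          rw [swap k a]
          simp [combo_a]
        simpa [Finset.sum_apply, smul_eq_mul] using h1
      · intro j'
        have hGj : ∀ e, combo e (fun i => h i j') = G e j' := by
          intro e
          simp [hcombo, hG, Finset.sum_apply, smul_eq_mul]
        have h1 : ∑ i, (∑ e, Λ' k e * μ e i) * h i j' = 0 := by
          rw [swap k (fun i => h i j')]
          have h2 := congrFun (hΛz k) j'
          simp only [Finset.sum_apply, Pi.smul_apply, smul_eq_mul, Pi.zero_apply] at h2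
          simp only [hGj]
          exact h2
        simpa [Finset.sum_apply, smul_eq_mul] using h1
    · intro φ
      constructor
      · rintro ⟨x, hx⟩ k
        have hx' : ∀ i, a i * x 0 + h i ⬝ᵥ (fun j => x j.succ) ≤ φ i := fun i => by
          rw [← split_x x i]; exact hx i
        have hGx := (key φ (fun j => x j.succ)).1 ⟨x 0, hx'⟩
        have h1 := (hΛiff (fun e => combo e φ)).1 ⟨_, hGx⟩ k
        rw [swap k φ]
        exact h1
      · intro hk
        have h1 : ∀ k, 0 ≤ ∑ e, Λ' k e * combo e φ := by
          intro k
          have := hk k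
          rwa [swap k φ] at this
        obtain ⟨x, hx⟩ := (hΛiff (fun e => combo e φ)).2 h1
        obtain ⟨t, ht⟩ := (key φ x).2 hx
        refine ⟨Fin.cons t x, fun i => ?_⟩
        rw [split_x]
        simpa [Fin.cons_zero, Fin.cons_succ] using ht i

def IsPL (f : ℝ → ℝ) (a b : ℝ) : Prop :=
  ∃ N : ℕ, 1 ≤ N ∧ ∃ t : ℕ → ℝ, t 0 = a ∧ t N = b ∧ (∀ j < N, t j ≤ t (j+1)) ∧
    ∃ α β : ℕ → ℝ, ∀ j, 1 ≤ j → j ≤ N →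
      ∀ p ∈ Set.Icc (t (j-1)) (t j), f p = α j * p + β j

lemma affine_le_max (a b u v x : ℝ) (h1 : u ≤ x) (h2 : x ≤ v) :
    a * x + b ≤ max (a * u + b) (a * v + b) := by
  rcases le_total 0 a with ha | ha
  · exact le_max_of_le_right (by nlinarith)
  · exact le_max_of_le_left (by nlinarith)

lemma min_le_affine (a b u v x : ℝ) (h1 : u ≤ x) (h2 : x ≤ v) :
    min (a * u + b) (a * v + b) ≤ a * x + b := by
  rcases le_total 0 a with ha | ha
  · exact min_le_of_left_le (by nlinarith)
  · exact min_le_of_right_le (by nlinarith)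

lemma minAffine_cross (α β γ δ u v : ℝ) (huv : u ≤ v)
    (h1 : (α-γ)*u+(β-δ) ≤ 0) (h2 : 0 ≤ (α-γ)*v+(β-δ)) :
    ∃ w, u ≤ w ∧ w ≤ v ∧ ∃ a₁ b₁ a₂ b₂ : ℝ,
      (∀ x, u ≤ x → x ≤ w → min (α*x+β) (γ*x+δ) = a₁*x+b₁) ∧
      (∀ x, w ≤ x → x ≤ v → min (α*x+β) (γ*x+δ) = a₂*x+b₂) := by
  by_cases hE : (α-γ)*v+(β-δ) - ((α-γ)*u+(β-δ)) = 0
  · have hu0 : (α-γ)*u+(β-δ) = 0 := by linarith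
    have hv0 : (α-γ)*v+(β-δ) = 0 := by linarith
    refine ⟨v, huv, le_rfl, α, β, α, β, ?_, ?_⟩
    · intro x hx1 hx2
      have h3 := affine_le_max (α-γ) (β-δ) u v x hx1 hx2
      rw [hu0, hv0, max_self] at h3
      rw [min_eq_left (by linarith)]
    · intro x hx1 hx2
      have hxv : x = v := le_antisymm hx2 hx1
      subst hxv
      rw [min_eq_left (by linarith)]
  · have hd : 0 < (α-γ)*v+(β-δ) - ((α-γ)*u+(β-δ)) :=
      lt_of_le_of_ne (by linarith) (Ne.symm hE)
    have hne : ((α-γ)*v+(β-δ) - ((α-γ)*u+(β-δ))) ≠ 0 := ne_of_gt hd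
    refine ⟨u + (v-u)*(-((α-γ)*u+(β-δ)))/((α-γ)*v+(β-δ) - ((α-γ)*u+(β-δ))),
      ?_, ?_, α, β, γ, δ, ?_, ?_⟩
    · have h3 : 0 ≤ (v-u)*(-((α-γ)*u+(β-δ)))/((α-γ)*v+(β-δ) - ((α-γ)*u+(β-δ))) := by
        apply div_nonneg _ (le_of_lt hd)
        nlinarith
      linarith
    · have h3 : (v-u)*(-((α-γ)*u+(β-δ)))/((α-γ)*v+(β-δ) - ((α-γ)*u+(β-δ))) ≤ v - u := by
        rw [div_le_iff₀ hd]
        nlinarith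
      linarith
    all_goals {
      have hww : (α-γ)*(u + (v-u)*(-((α-γ)*u+(β-δ)))/((α-γ)*v+(β-δ) - ((α-γ)*u+(β-δ))))+(β-δ) = 0 := by
        have h4 : (α-γ)*(u + (v-u)*(-((α-γ)*u+(β-δ)))/((α-γ)*v+(β-δ) - ((α-γ)*u+(β-δ))))+(β-δ)
            = ((α-γ)*u+(β-δ)) + ((α-γ)*v+(β-δ) - ((α-γ)*u+(β-δ))) * (-((α-γ)*u+(β-δ))) / ((α-γ)*v+(β-δ) - ((α-γ)*u+(β-δ))) := by
          ring
        rw [h4, mul_div_cancel_left₀ _ hne]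
        ring
      intro x hx1 hx2
      first
      | (rw [min_eq_left ?_]
         have h3 := affine_le_max (α-γ) (β-δ) u _ x hx1 hx2
         rw [hww] at h3
         have hm : max ((α-γ)*u+(β-δ)) 0 ≤ 0 := max_le h1 le_rfl
         linarith)
      | (rw [min_eq_right ?_]
         have h3 := min_le_affine (α-γ) (β-δ) _ v x hx1 hx2
         rw [hww] at h3
         have hm : 0 ≤ min 0 ((α-γ)*v+(β-δ)) := le_min le_rfl h2
         linarith)
    }

lemma minAffine_split (α β γ δ u v : ℝ) (huv : u ≤ v) :
    ∃ w, u ≤ w ∧ w ≤ v ∧ ∃ a₁ b₁ a₂ b₂ : ℝ,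
      (∀ x, u ≤ x → x ≤ w → min (α*x+β) (γ*x+δ) = a₁*x+b₁) ∧
      (∀ x, w ≤ x → x ≤ v → min (α*x+β) (γ*x+δ) = a₂*x+b₂) := by
  rcases le_total ((α-γ)*u+(β-δ)) 0 with h1 | h1 <;>
    rcases le_total 0 ((α-γ)*v+(β-δ)) with h2 | h2
  · exact minAffine_cross α β γ δ u v huv h1 h2
  · refine ⟨v, huv, le_rfl, α, β, α, β, ?_, ?_⟩
    · intro x hx1 hx2
      have h3 := affine_le_max (α-γ) (β-δ) u v x hx1 hx2
      have hm : max ((α-γ)*u+(β-δ)) ((α-γ)*v+(β-δ)) ≤ 0 := max_le h1 h2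
      rw [min_eq_left (by linarith)]
    · intro x hx1 hx2
      have hxv : x = v := le_antisymm hx2 hx1
      subst hxv
      rw [min_eq_left (by linarith)]
  · refine ⟨v, huv, le_rfl, γ, δ, γ, δ, ?_, ?_⟩
    · intro x hx1 hx2
      have h3 := min_le_affine (α-γ) (β-δ) u v x hx1 hx2
      have hm : 0 ≤ min ((α-γ)*u+(β-δ)) ((α-γ)*v+(β-δ)) := le_min h1 h2
      rw [min_eq_right (by linarith)]
    · intro x hx1 hx2
      have hxv : x = v := le_antisymm hx2 hx1
      subst hxv
      rw [min_eq_right (by linarith)]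
  · obtain ⟨w, hw1, hw2, a₁, b₁, a₂, b₂, hp1, hp2⟩ :=
      minAffine_cross γ δ α β u v huv (by linarith) (by linarith)
    refine ⟨w, hw1, hw2, a₁, b₁, a₂, b₂, ?_, ?_⟩
    · intro x hx1 hx2
      rw [min_comm]
      exact hp1 x hx1 hx2
    · intro x hx1 hx2
      rw [min_comm]
      exact hp2 x hx1 hx2

lemma t_chain (t : ℕ → ℝ) (N : ℕ) (hm : ∀ j < N, t j ≤ t (j+1)) :
    ∀ k, k ≤ N → ∀ i, i ≤ k → t i ≤ t k := by
  intro k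
  induction k with
  | zero =>
    intro _ i hi
    have h0 : i = 0 := Nat.le_zero.1 hi
    subst h0; exact le_rfl
  | succ k ih =>
    intro hkN i hi
    by_cases hik : i = k + 1
    · subst hik; exact le_rfl
    · exact le_trans (ih (by omega) i (by omega)) (hm k (by omega))

lemma isPL_affine (u v lo hi : ℝ) (h : lo ≤ hi) : IsPL (fun p => u*p+v) lo hi := by
  refine ⟨1, le_rfl, fun k => if k = 0 then lo else hi, by simp, by simp, ?_,
    fun _ => u, fun _ => v, ?_⟩
  · intro j hj
    have h0 : j = 0 := by omega
    subst h0
    simp [h]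
  · intro j _ _ p _
    rfl

lemma isPL_min_affine (f : ℝ → ℝ) (lo hi u v : ℝ) (hf : IsPL f lo hi) :
    IsPL (fun p => min (f p) (u*p+v)) lo hi := by
  obtain ⟨N, hN, t, ht0, htN, hmono, α, β, hpiece⟩ := hf
  have hsplit : ∀ j : ℕ, ∃ w a₁ b₁ a₂ b₂ : ℝ,
      (1 ≤ j → j ≤ N → (t (j-1) ≤ w ∧ w ≤ t j ∧
        (∀ x, t (j-1) ≤ x → x ≤ w → min (f x) (u*x+v) = a₁*x+b₁) ∧
        (∀ x, w ≤ x → x ≤ t j → min (f x) (u*x+v) = a₂*x+b₂))) := by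
    intro j
    by_cases hj : 1 ≤ j ∧ j ≤ N
    · obtain ⟨hj1, hj2⟩ := hj
      have hle : t (j-1) ≤ t j := by
        have h5 := hmono (j-1) (by omega)
        have hj' : j - 1 + 1 = j := by omega
        rwa [hj'] at h5
      obtain ⟨w, hw1, hw2, a₁, b₁, a₂, b₂, hp1, hp2⟩ :=
        minAffine_split (α j) (β j) u v (t (j-1)) (t j) hle
      refine ⟨w, a₁, b₁, a₂, b₂, fun _ _ => ⟨hw1, hw2, ?_, ?_⟩⟩
      · intro x h1 h2
        rw [hpiece j hj1 hj2 x ⟨h1, le_trans h2 hw2⟩]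
        exact hp1 x h1 h2
      · intro x h1 h2
        rw [hpiece j hj1 hj2 x ⟨le_trans hw1 h1, h2⟩]
        exact hp2 x h1 h2
    · exact ⟨0, 0, 0, 0, 0, fun h1 h2 => absurd ⟨h1, h2⟩ hj⟩
  choose w a₁ b₁ a₂ b₂ hw using hsplit
  refine ⟨2*N, by omega, fun k => if k % 2 = 0 then t (k/2) else w (k/2 + 1), ?_, ?_, ?_,
    fun k => if k % 2 = 0 then a₂ (k/2) else a₁ ((k+1)/2),
    fun k => if k % 2 = 0 then b₂ (k/2) else b₁ ((k+1)/2), ?_⟩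
  · simpa using ht0
  · have e1 : (2*N) % 2 = 0 := by omega
    have e2 : 2*N/2 = N := by omega
    simp [e1, e2, htN]
  · intro k hk
    dsimp only
    by_cases hpar : k % 2 = 0
    · rw [if_pos hpar, if_neg (by omega : ¬ (k+1) % 2 = 0)]
      have e2 : (k+1)/2 = k/2 := by omega
      rw [e2]
      have h5 := (hw (k/2+1) (by omega) (by omega)).1
      have e3 : k/2 + 1 - 1 = k/2 := by omega
      rwa [e3] at h5
    · rw [if_neg hpar, if_pos (by omega : (k+1) % 2 = 0)]
      have e2 : (k+1)/2 = k/2+1 := by omega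
      rw [e2]
      exact (hw (k/2+1) (by omega) (by omega)).2.1
  · intro j hj1 hj2 p hp
    simp only [Set.mem_Icc] at hp
    by_cases hpar : j % 2 = 0
    · have hj2' : 2 ≤ j := by omega
      rw [if_neg (by omega : ¬ (j-1) % 2 = 0), if_pos hpar] at hp
      have e2 : (j-1)/2 + 1 = j/2 := by omega
      rw [e2] at hp
      have h6 := (hw (j/2) (by omega) (by omega)).2.2.2
      dsimp only
      rw [if_pos hpar, if_pos hpar]
      exact h6 p hp.1 hp.2
    · rw [if_pos (by omega : (j-1) % 2 = 0), if_neg hpar] at hp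
      have e2 : j/2 + 1 = (j+1)/2 := by omega
      have e3 : (j-1)/2 = (j+1)/2 - 1 := by omega
      rw [e2, e3] at hp
      have h6 := (hw ((j+1)/2) (by omega) (by omega)).2.2.1
      dsimp only
      rw [if_neg hpar, if_neg hpar]
      have e4 : (j+1)/2 - 1 + 1 = (j+1)/2 := by omega
      exact h6 p (by rw [← e4] at hp; exact hp.1) hp.2

lemma isPL_inf' {κ : Type} (s : Finset κ) (hs : s.Nonempty) (A B : κ → ℝ)
    (lo hi : ℝ) (h : lo ≤ hi) :
    IsPL (fun p => s.inf' hs (fun k => A k * p + B k)) lo hi := by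
  induction hs using Finset.Nonempty.cons_induction with
  | singleton a =>
    have e : (fun p => ({a} : Finset κ).inf' (Finset.singleton_nonempty a)
        (fun k => A k * p + B k)) = fun p => A a * p + B a := by
      funext p
      simp
    rw [e]
    exact isPL_affine (A a) (B a) lo hi h
  | cons a s ha hs ih =>
    have e : (fun p => (Finset.cons a s ha).inf' (Finset.cons_nonempty ha)
        (fun k => A k * p + B k)) =
        fun p => min (s.inf' hs (fun k => A k * p + B k)) (A a * p + B a) := by
      funext p
      rw [Finset.inf'_cons]
      exact min_comm _ _
    rw [e]
    exact isPL_min_affine _ lo hi (A a) (B a) ih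


/-- Theorem 1 (piecewise linearity): if the LP is feasible for all `p ∈ [0, pbar]` and
bounded above at `p = 0`, then `v` is piecewise linear on `[0, pbar]`: there are
breakpoints `0 = t 0 ≤ t 1 ≤ ⋯ ≤ t N = pbar` and affine pieces `α j * p + β j`. -/
theorem commitValue_piecewiseLinear {m n : ℕ} (A : Matrix (Fin m) (Fin n) ℝ)
    (b : Fin m → ℝ) (c d : Fin n → ℝ) (pbar : ℝ) (hpbar : 0 ≤ pbar)
    (hfeas : ∀ p ∈ Set.Icc (0 : ℝ) pbar, (feasibleSet A b d p).Nonempty)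
    (hbdd : BddAbove ((fun x => c ⬝ᵥ x) '' feasibleSet A b d 0)) :
    ∃ (N : ℕ), 1 ≤ N ∧ ∃ t : ℕ → ℝ, t 0 = 0 ∧ t N = pbar ∧
      (∀ j < N, t j ≤ t (j + 1)) ∧
      ∃ α β : ℕ → ℝ, ∀ j, 1 ≤ j → j ≤ N →
        ∀ p ∈ Set.Icc (t (j - 1)) (t j),
          commitValue A b c d p = α j * p + β j := by
  classical
  set ι := (Fin n ⊕ Fin m ⊕ Fin m) ⊕ (Unit ⊕ Unit) with hι
  set gg : ι → Fin n → ℝ :=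
    Sum.elim
      (Sum.elim (fun j => fun j' => if j' = j then (-1:ℝ) else 0)
        (Sum.elim (fun i => A i) (fun i => fun j => -(A i j))))
      (Sum.elim (fun _ => fun j => -(d j)) (fun _ => fun j => -(c j))) with hgg
  set pc : ι → ℝ := Sum.elim (fun _ => 0) (Sum.elim (fun _ => -1) (fun _ => 0)) with hpc
  set yc : ι → ℝ := Sum.elim (fun _ => 0) (Sum.elim (fun _ => 0) (fun _ => -1)) with hyc
  set rc : ι → ℝ :=
    Sum.elim (Sum.elim (fun _ => 0) (Sum.elim (fun i => b i) (fun i => -(b i))))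
      (fun _ => 0) with hrc
  have dneg : ∀ (v : Fin n → ℝ) (x : Fin n → ℝ), (fun j => -(v j)) ⬝ᵥ x = -(v ⬝ᵥ x) := by
    intro v x
    simp [dotProduct]
  have eneg : ∀ (j : Fin n) (x : Fin n → ℝ),
      (fun j' => if j' = j then (-1:ℝ) else 0) ⬝ᵥ x = -(x j) := by
    intro j x
    simp [dotProduct, ite_mul, Finset.sum_ite_eq']
  have hmV : ∀ (x : Fin n → ℝ) (i : Fin m), A.mulVec x i = A i ⬝ᵥ x := fun x i => rfl
  have hmem : ∀ (x : Fin n → ℝ) (p y : ℝ),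
      (x ∈ feasibleSet A b d p ∧ y ≤ c ⬝ᵥ x) ↔
      (∀ e, gg e ⬝ᵥ x ≤ pc e * p + yc e * y + rc e) := by
    intro x p y
    constructor
    · rintro ⟨⟨hx0, hAx, hdx⟩, hy⟩ e
      rcases e with (j | (i | i)) | (u | u) <;>
        simp only [hgg, hpc, hyc, hrc, Sum.elim_inl, Sum.elim_inr]
      · rw [eneg j x]
        have := hx0 j
        simp only [Pi.zero_apply] at this
        linarith
      · have := congrFun hAx i
        rw [hmV] at this
        simp only [this]
        linarith
      · rw [dneg (A i) x]
        have := congrFun hAx i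
        rw [hmV] at this
        rw [this]
        linarith
      · rw [dneg d x]
        linarith [hdx]
      · rw [dneg c x]
        linarith
    · intro he
      refine ⟨⟨?_, ?_, ?_⟩, ?_⟩
      · intro j
        have := he (.inl (.inl j))
        rw [hgg] at this
        simp only [Sum.elim_inl, hpc, hyc, hrc] at this
        rw [eneg j x] at this
        simp only [Sum.elim_inl, Pi.zero_apply] at this ⊢
        linarith
      · funext i
        have h1 := he (.inl (.inr (.inl i)))
        have h2 := he (.inl (.inr (.inr i)))
        rw [hgg] at h1 h2
        simp only [Sum.elim_inl, Sum.elim_inr, hpc, hyc, hrc] at h1 h2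
        rw [dneg (A i) x] at h2
        rw [hmV]
        linarith
      · have h1 := he (.inr (.inl ()))
        rw [hgg] at h1
        simp only [Sum.elim_inl, Sum.elim_inr, hpc, hyc, hrc] at h1
        rw [dneg d x] at h1
        show p ≤ d ⬝ᵥ x
        linarith
      · have h1 := he (.inr (.inr ()))
        rw [hgg] at h1
        simp only [Sum.elim_inl, Sum.elim_inr, hpc, hyc, hrc] at h1
        rw [dneg c x] at h1
        linarith
  obtain ⟨κ, ftκ, Λ, hΛn, hΛz, hΛiff⟩ := fourier_motzkin n ι gg
  haveI := ftκ
  set SS : κ → ℝ := fun k => ∑ e, Λ k e * pc e with hSS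
  set WW : κ → ℝ := fun k => ∑ e, Λ k e * yc e with hWW
  set RR : κ → ℝ := fun k => ∑ e, Λ k e * rc e with hRR
  have hsum : ∀ (k : κ) (p y : ℝ),
      ∑ e, Λ k e * (pc e * p + yc e * y + rc e) = SS k * p + WW k * y + RR k := by
    intro k p y
    have h1 : ∀ e : ι, Λ k e * (pc e * p + yc e * y + rc e) =
        (Λ k e * pc e) * p + ((Λ k e * yc e) * y + (Λ k e * rc e)) := fun e => by ring
    rw [Finset.sum_congr rfl (fun e _ => h1 e), Finset.sum_add_distrib,
      Finset.sum_add_distrib, ← Finset.sum_mul, ← Finset.sum_mul]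
    rw [hSS, hWW, hRR]
    ring
  have main : ∀ p y : ℝ, (∃ x, x ∈ feasibleSet A b d p ∧ y ≤ c ⬝ᵥ x) ↔
      ∀ k, 0 ≤ SS k * p + WW k * y + RR k := by
    intro p y
    constructor
    · rintro ⟨x, hx⟩ k
      have h2 := (hΛiff (fun e => pc e * p + yc e * y + rc e)).1 ⟨x, (hmem x p y).1 hx⟩ k
      rwa [hsum k p y] at h2
    · intro hk
      obtain ⟨x, hx⟩ := (hΛiff _).2 (fun k => by rw [hsum k p y]; exact hk k)
      exact ⟨x, (hmem x p y).2 hx⟩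
  obtain ⟨u0, hu0⟩ := hbdd
  have hu0' : ∀ z ∈ (fun x => c ⬝ᵥ x) '' feasibleSet A b d 0, z ≤ u0 := hu0
  have hsubset : ∀ p : ℝ, 0 ≤ p → feasibleSet A b d p ⊆ feasibleSet A b d 0 :=
    fun p hp x hx => ⟨hx.1, hx.2.1, le_trans hp hx.2.2⟩
  set K : Finset κ := Finset.univ.filter (fun k => WW k < 0) with hK
  have hKne : K.Nonempty := by
    by_contra hKe
    have hW : ∀ k, 0 ≤ WW k := fun k =>
      le_of_not_gt (fun h => hKe ⟨k, by simp [hK, h]⟩)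
    obtain ⟨x₀, hx₀⟩ := hfeas 0 ⟨le_rfl, hpbar⟩
    set y₁ := max (c ⬝ᵥ x₀) (u0 + 1) with hy₁
    have h1 : ∀ k, 0 ≤ SS k * 0 + WW k * y₁ + RR k := by
      intro k
      have h2 := (main 0 (c ⬝ᵥ x₀)).1 ⟨x₀, hx₀, le_rfl⟩ k
      have h3 : WW k * (c ⬝ᵥ x₀) ≤ WW k * y₁ :=
        mul_le_mul_of_nonneg_left (le_max_left _ _) (hW k)
      linarith
    obtain ⟨x, hx, hy⟩ := (main 0 y₁).2 h1
    have h4 : y₁ ≤ u0 := le_trans hy (hu0' _ ⟨x, hx, rfl⟩)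
    have h5 : u0 + 1 ≤ u0 := le_trans (le_max_right _ _) h4
    linarith
  set AA : κ → ℝ := fun k => SS k / (-WW k) with hAA
  set BB : κ → ℝ := fun k => RR k / (-WW k) with hBB
  have haff : ∀ (k : κ) (p : ℝ), WW k < 0 →
      AA k * p + BB k = (SS k * p + RR k) / (-WW k) := by
    intro k p hWk
    rw [hAA, hBB]
    rw [div_mul_eq_mul_div, ← add_div]
  have hval : ∀ p ∈ Set.Icc (0:ℝ) pbar,
      commitValue A b c d p = K.inf' hKne (fun k => AA k * p + BB k) := by
    intro p hp
    obtain ⟨x₀, hx₀⟩ := hfeas p hp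
    have hy₀D : ∀ k, 0 ≤ SS k * p + WW k * (c ⬝ᵥ x₀) + RR k :=
      (main p (c ⬝ᵥ x₀)).1 ⟨x₀, hx₀, le_rfl⟩
    set U := K.inf' hKne (fun k => AA k * p + BB k) with hU
    have hUB : ∀ y : ℝ, (∀ k, 0 ≤ SS k * p + WW k * y + RR k) → y ≤ U := by
      intro y hy
      rw [hU]
      apply Finset.le_inf'
      intro k hk
      have hWk : WW k < 0 := (Finset.mem_filter.1 hk).2
      have h2 := hy k
      rw [haff k p hWk, le_div_iff₀ (by linarith : (0:ℝ) < -WW k)]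
      linarith
    have hy₀U : c ⬝ᵥ x₀ ≤ U := hUB _ hy₀D
    have hUD : ∀ k, 0 ≤ SS k * p + WW k * U + RR k := by
      intro k
      rcases lt_trichotomy (WW k) 0 with hWk | hWk | hWk
      · have hk : k ∈ K := by simp [hK, hWk]
        have h4 : U ≤ AA k * p + BB k := Finset.inf'_le _ hk
        rw [haff k p hWk, le_div_iff₀ (by linarith : (0:ℝ) < -WW k)] at h4
        linarith
      · have h2 := hy₀D k
        rw [hWk] at h2 ⊢
        linarith
      · have h2 := hy₀D k
        have h3 : WW k * (c ⬝ᵥ x₀) ≤ WW k * U :=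
          mul_le_mul_of_nonneg_left hy₀U (le_of_lt hWk)
        linarith
    have hbddp : BddAbove ((fun x => c ⬝ᵥ x) '' feasibleSet A b d p) := by
      refine ⟨u0, ?_⟩
      rintro z ⟨x, hx, rfl⟩
      exact hu0' _ ⟨x, hsubset p hp.1 hx, rfl⟩
    rw [commitValue]
    apply le_antisymm
    · refine csSup_le ⟨c ⬝ᵥ x₀, ⟨x₀, hx₀, rfl⟩⟩ ?_
      rintro z ⟨x, hx, rfl⟩
      exact hUB _ ((main p (c ⬝ᵥ x)).1 ⟨x, hx, le_rfl⟩)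
    · obtain ⟨x, hx, hyx⟩ := (main p U).2 hUD
      exact le_trans hyx (le_csSup hbddp ⟨x, hx, rfl⟩)
  obtain ⟨N, hN1, t, ht0, htN, hmono, α, β, hpiece⟩ :=
    isPL_inf' K hKne AA BB 0 pbar hpbar
  refine ⟨N, hN1, t, ht0, htN, hmono, α, β, ?_⟩
  intro j hj1 hj2 p hp
  have hplo : (0:ℝ) ≤ p := by
    have h6 : t 0 ≤ t (j-1) := t_chain t N hmono (j-1) (by omega) 0 (by omega)
    rw [ht0] at h6
    linarith [hp.1]
  have hphi : p ≤ pbar := by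
    have h6 : t j ≤ t N := t_chain t N hmono N le_rfl j hj2
    rw [htN] at h6
    linarith [hp.2]
  rw [hval p ⟨hplo, hphi⟩]
  exact hpiece j hj1 hj2 p hp
end

section
/- (Query-improvement lemma: replacing each query element by the posterior-optimal commitment does not decrease EUS; used in the proof of Lemma 2.) Let Q ⊆ C be a finite nonempty query, let r : I → C be a response map satisfying r i ∈ Q and f i (r i) = max_{c ∈ Q} f i c for every i ∈ I, and let c* : C → C be a map such that for every q ∈ Q and every c ∈ C, Σ_{i ∈ I, r i = q} w i · f i c ≤ Σ_{i ∈ I, r i = q} w i · f i (c* q) (i.e., c* q is an optimal commitment for the posterior obtained when the response is q). Then the query Q' given by the image of Q under c* satisfies |Q'| ≤ |Q| and EUS(Q') ≥ EUS(Q). -/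
/-- Expected Utility of Selection of a finite nonempty query `Q` of commitments:
`EUS(Q) = Σ i, w i * max_{c ∈ Q} f i c` (noiseless response model). -/
noncomputable def EUS {C I : Type*} [Fintype I] (w : I → ℝ) (f : I → C → ℝ)
    (Q : Finset C) (hQ : Q.Nonempty) : ℝ :=
  ∑ i, w i * Q.sup' hQ (f i)

/-- Query-improvement lemma: if `r` maps each candidate model `i` to an optimal
response in `Q`, and `cstar q` is an optimal commitment for the posterior obtained
when the response is `q`, then replacing each element of `Q` by its posterior-optimal
commitment yields a query `Q' = cstar '' Q` with `|Q'| ≤ |Q|` and `EUS(Q') ≥ EUS(Q)`. -/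
theorem EUS_query_improvement {C I : Type*} [DecidableEq C] [Fintype I]
    (w : I → ℝ) (hw : ∀ i, 0 ≤ w i) (f : I → C → ℝ)
    (Q : Finset C) (hQ : Q.Nonempty)
    (r : I → C) (hr : ∀ i, r i ∈ Q ∧ f i (r i) = Q.sup' hQ (f i))
    (cstar : C → C)
    (hcstar : ∀ q ∈ Q, ∀ c : C,
      ∑ i ∈ Finset.univ.filter (fun i => r i = q), w i * f i c ≤
        ∑ i ∈ Finset.univ.filter (fun i => r i = q), w i * f i (cstar q)) :
    (Q.image cstar).card ≤ Q.card ∧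
      EUS w f Q hQ ≤ EUS w f (Q.image cstar) (hQ.image cstar) := by
  refine ⟨Finset.card_image_le, ?_⟩
  have h1 : EUS w f Q hQ = ∑ i, w i * f i (r i) := by
    unfold EUS
    exact Finset.sum_congr rfl fun i _ => by rw [(hr i).2]
  rw [h1]
  rw [← Finset.sum_fiberwise_of_maps_to (g := r) (fun i _ => (hr i).1)
    (fun i => w i * f i (r i))]
  unfold EUS
  rw [← Finset.sum_fiberwise_of_maps_to (g := r) (fun i _ => (hr i).1)
    (fun i => w i * (Q.image cstar).sup' (hQ.image cstar) (f i))]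
  apply Finset.sum_le_sum
  intro q hq
  calc ∑ i ∈ Finset.univ.filter (fun i => r i = q), w i * f i (r i)
      = ∑ i ∈ Finset.univ.filter (fun i => r i = q), w i * f i q := by
        apply Finset.sum_congr rfl
        intro i hi
        rw [Finset.mem_filter] at hi
        rw [hi.2]
    _ ≤ ∑ i ∈ Finset.univ.filter (fun i => r i = q), w i * f i (cstar q) :=
        hcstar q hq q
    _ ≤ ∑ i ∈ Finset.univ.filter (fun i => r i = q),
          w i * (Q.image cstar).sup' (hQ.image cstar) (f i) := by
        apply Finset.sum_le_sum
        intro i _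
        exact mul_le_mul_of_nonneg_left
          (Finset.le_sup' (f i) (Finset.mem_image_of_mem cstar hq)) (hw i)
end

section
/- (Lemma 2 / Appendix Lemma 6, sufficiency of a posterior-optimal commitment set for query formulation.) Let D ⊆ C be a finite nonempty subset such that for every weight vector w' : I → ℝ with w'_i ≥ 0 for all i, there exists d ∈ D with Σ_{i ∈ I} w'_i · f i c ≤ Σ_{i ∈ I} w'_i · f i d for every c ∈ C (i.e., D contains an optimal commitment with respect to every posterior). Then for every finite nonempty query Q ⊆ C there exists a nonempty query Q' ⊆ D with |Q'| ≤ |Q| and EUS(Q') ≥ EUS(Q). In particular, for every query size k, the supremum of EUS over queries of size at most k drawn from C equals the maximum of EUS over queries of size at most k drawn from D. -/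
/-- Lemma 2 (sufficiency of a posterior-optimal commitment set): if a finite nonempty
set `D` contains an optimal commitment with respect to every nonnegative weight
(posterior) vector, then every query can be replaced by one drawn from `D` of no
larger size and no smaller EUS; consequently, for every query size `k ≥ 1`, the
supremum of EUS over size-≤-k queries from `C` equals that over size-≤-k queries
from `D`. -/
theorem EUS_breakpoint_sufficiency {C I : Type*} [DecidableEq C] [Fintype I]
    (w : I → ℝ) (hw : ∀ i, 0 ≤ w i) (f : I → C → ℝ)
    (D : Finset C) (hD : D.Nonempty)
    (hopt : ∀ w' : I → ℝ, (∀ i, 0 ≤ w' i) →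
      ∃ d ∈ D, ∀ c : C, ∑ i, w' i * f i c ≤ ∑ i, w' i * f i d) :
    (∀ (Q : Finset C) (hQ : Q.Nonempty),
      ∃ (Q' : Finset C) (hQ' : Q'.Nonempty), Q' ⊆ D ∧ Q'.card ≤ Q.card ∧
        EUS w f Q hQ ≤ EUS w f Q' hQ') ∧
    ∀ k : ℕ, 1 ≤ k →
      sSup {x : ℝ | ∃ (Q : Finset C) (hQ : Q.Nonempty),
          Q.card ≤ k ∧ EUS w f Q hQ = x} =
        sSup {x : ℝ | ∃ (Q : Finset C) (hQ : Q.Nonempty),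
          Q ⊆ D ∧ Q.card ≤ k ∧ EUS w f Q hQ = x} := by
  classical
  have main : ∀ (Q : Finset C) (hQ : Q.Nonempty),
      ∃ (Q' : Finset C) (hQ' : Q'.Nonempty), Q' ⊆ D ∧ Q'.card ≤ Q.card ∧
        EUS w f Q hQ ≤ EUS w f Q' hQ' := by
    intro Q hQ
    have hg : ∀ i : I, ∃ g ∈ Q, Q.sup' hQ (f i) = f i g := fun i =>
      Finset.exists_mem_eq_sup' hQ (f i)
    choose g hgQ hgeq using hg
    set W : I → C → ℝ := fun i q => if g i = q then w i else 0 with hW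
    have hWnn : ∀ i q, 0 ≤ W i q := by
      intro i q; simp only [hW]; split_ifs
      · exact hw i
      · exact le_refl 0
    have hd : ∀ q : C, ∃ d ∈ D, ∀ c : C,
        ∑ i, W i q * f i c ≤ ∑ i, W i q * f i d :=
      fun q => hopt (fun i => W i q) (fun i => hWnn i q)
    choose d hdD hdle using hd
    refine ⟨Q.image d, hQ.image d, ?_, Finset.card_image_le, ?_⟩
    · intro x hx
      obtain ⟨q, hq, rfl⟩ := Finset.mem_image.mp hx
      exact hdD q
    · have hQ' : (Q.image d).Nonempty := hQ.image d
      have stepA : EUS w f Q hQ = ∑ q ∈ Q, ∑ i, W i q * f i q := by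
        rw [Finset.sum_comm]
        unfold EUS
        refine Finset.sum_congr rfl fun i _ => ?_
        rw [hgeq i]
        rw [Finset.sum_eq_single_of_mem (g i) (hgQ i)]
        · simp [hW]
        · intro q hq hne
          simp [hW, Ne.symm hne]
      have stepB : ∑ q ∈ Q, ∑ i, W i q * f i q ≤
          ∑ q ∈ Q, ∑ i, W i q * f i (d q) :=
        Finset.sum_le_sum fun q _ => hdle q q
      have stepC : ∑ q ∈ Q, ∑ i, W i q * f i (d q) ≤
          ∑ q ∈ Q, ∑ i, W i q * (Q.image d).sup' hQ' (f i) := by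
        refine Finset.sum_le_sum fun q hq => Finset.sum_le_sum fun i _ => ?_
        exact mul_le_mul_of_nonneg_left
          (Finset.le_sup' (f i) (Finset.mem_image_of_mem d hq)) (hWnn i q)
      have stepD : ∑ q ∈ Q, ∑ i, W i q * (Q.image d).sup' hQ' (f i) =
          EUS w f (Q.image d) hQ' := by
        rw [Finset.sum_comm]
        unfold EUS
        refine Finset.sum_congr rfl fun i _ => ?_
        rw [← Finset.sum_mul]
        congr 1
        rw [Finset.sum_eq_single_of_mem (g i) (hgQ i)]
        · simp [hW]
        · intro q hq hne
          simp [hW, Ne.symm hne]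
      rw [stepA, stepD.symm] at *
      exact le_trans stepB stepC
  refine ⟨main, fun k hk => ?_⟩
  set S := {x : ℝ | ∃ (Q : Finset C) (hQ : Q.Nonempty),
      Q.card ≤ k ∧ EUS w f Q hQ = x}
  set T := {x : ℝ | ∃ (Q : Finset C) (hQ : Q.Nonempty),
      Q ⊆ D ∧ Q.card ≤ k ∧ EUS w f Q hQ = x}
  have hd0 : hD.choose ∈ D := hD.choose_spec
  set d0 := hD.choose
  have hTsub : T ⊆ S := fun x ⟨Q, hQ, _, hcard, hx⟩ => ⟨Q, hQ, hcard, hx⟩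
  have hTne : T.Nonempty := by
    refine ⟨EUS w f {d0} (Finset.singleton_nonempty d0),
      {d0}, Finset.singleton_nonempty d0, ?_, by simpa using hk, rfl⟩
    simpa using hd0
  have hTbdd : BddAbove T := by
    refine ⟨EUS w f D hD, ?_⟩
    rintro x ⟨Q, hQ, hQD, _, rfl⟩
    exact Finset.sum_le_sum fun i _ => mul_le_mul_of_nonneg_left
      (Finset.sup'_le hQ (f i) fun c hc => Finset.le_sup' (f i) (hQD hc)) (hw i)
  have hSle : ∀ x ∈ S, x ≤ sSup T := by
    rintro x ⟨Q, hQ, hcard, rfl⟩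
    obtain ⟨Q', hQ', hQ'D, hcard', hle⟩ := main Q hQ
    exact le_trans hle (le_csSup hTbdd ⟨Q', hQ', hQ'D, le_trans hcard' hcard, rfl⟩)
  have hSne : S.Nonempty := hTne.mono hTsub
  refine le_antisymm (csSup_le hSne hSle) (csSup_le_csSup ⟨sSup T, hSle⟩ hTne hTsub)
end

section
/- (Theorem 5, no loss in restricting queries to breakpoint commitments.) Let τ be a finite nonempty type of commitment times. For each T ∈ τ let p̄_T ≥ 0 with breakpoints 0 = t_{T,0} ≤ t_{T,1} ≤ ⋯ ≤ t_{T,n_T} = p̄_T, let h_T : ℝ → ℝ be affine on each subinterval [t_{T,j−1}, t_{T,j}] (the provider's piecewise linear commitment value for time T), and for each i ∈ I let g_{i,T} : ℝ → ℝ be convex on [0, p̄_T] (the recipient's commitment value under candidate model i). A commitment is a pair (T, p) with p ∈ [0, p̄_T], and the joint value under model i is f i (T, p) = h_T(p) + g_{i,T}(p). Then for every finite nonempty set Q of commitments there exists a nonempty set Q' consisting only of breakpoint commitments (T, t_{T,j}) with |Q'| ≤ |Q| and Σ_{i ∈ I} w_i · max_{c ∈ Q'} f i c ≥ Σ_{i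 ∈ I} w_i · max_{c ∈ Q} f i c. Hence, for every query size k, maximizing EUS over size-k queries of commitments loses nothing by restricting to the provider's breakpoint commitments. -/
/-- Theorem 5 (no loss in restricting queries to breakpoint commitments).
Commitments are pairs `(T, p)` with `p ∈ [0, pbar T]`; for each time `T` the
provider's value `h T` is piecewise linear with breakpoints `t T 0 ≤ ⋯ ≤ t T (N T)`,
and each candidate recipient value `g i T` is convex on `[0, pbar T]`. Then every
finite nonempty query `Q` of commitments can be replaced by a query `Q'` consisting
only of breakpoint commitments, with `|Q'| ≤ |Q|` and no smaller EUS. -/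
theorem EUS_breakpoint_query_no_loss {τ I : Type*} [Fintype τ] [Nonempty τ] [Fintype I]
    (w : I → ℝ) (hw : ∀ i, 0 ≤ w i)
    (pbar : τ → ℝ) (hpbar : ∀ T, 0 ≤ pbar T)
    (N : τ → ℕ) (hN : ∀ T, 1 ≤ N T)
    (t : τ → ℕ → ℝ) (ht0 : ∀ T, t T 0 = 0) (htN : ∀ T, t T (N T) = pbar T)
    (hmono : ∀ T, ∀ j < N T, t T j ≤ t T (j + 1))
    (h : τ → ℝ → ℝ)
    (hh : ∀ T, ∀ j, 1 ≤ j → j ≤ N T → ∃ α β : ℝ,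
      ∀ p ∈ Set.Icc (t T (j - 1)) (t T j), h T p = α * p + β)
    (g : I → τ → ℝ → ℝ)
    (hg : ∀ i T, ConvexOn ℝ (Set.Icc 0 (pbar T)) (g i T))
    (Q : Finset (τ × ℝ)) (hQ : Q.Nonempty)
    (hQvalid : ∀ c ∈ Q, c.2 ∈ Set.Icc 0 (pbar c.1)) :
    ∃ (Q' : Finset (τ × ℝ)) (hQ' : Q'.Nonempty),
      (∀ c ∈ Q', ∃ j ≤ N c.1, c.2 = t c.1 j) ∧
      Q'.card ≤ Q.card ∧
      ∑ i, w i * Q.sup' hQ (fun c => h c.1 c.2 + g i c.1 c.2) ≤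
        ∑ i, w i * Q'.sup' hQ' (fun c => h c.1 c.2 + g i c.1 c.2) := by
  classical
  let f : I → τ × ℝ → ℝ := fun i c => h c.1 c.2 + g i c.1 c.2
  -- monotonicity of breakpoints
  have hmono' : ∀ T (k j : ℕ), j ≤ k → k ≤ N T → t T j ≤ t T k := by
    intro T k
    induction k with
    | zero => intro j hj _; interval_cases j; exact le_rfl
    | succ m ih =>
      intro j hj hk
      rcases eq_or_lt_of_le hj with he | hlt
      · rw [he]
      · exact (ih j (by omega) (by omega)).trans (hmono T m (by omega))
  -- each commitment lies in some breakpoint segment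
  have hseg : ∀ c ∈ Q, ∃ j, 1 ≤ j ∧ j ≤ N c.1 ∧ t c.1 (j - 1) ≤ c.2 ∧ c.2 ≤ t c.1 j := by
    intro c hc
    obtain ⟨hp0, hpN⟩ := hQvalid c hc
    have hex : ∃ j, c.2 ≤ t c.1 j := ⟨N c.1, by rw [htN]; exact hpN⟩
    have hspec := Nat.find_spec hex
    have hj0N : Nat.find hex ≤ N c.1 := Nat.find_le (by rw [htN]; exact hpN)
    rcases Nat.eq_zero_or_pos (Nat.find hex) with h0 | hpos
    · have hp : c.2 = 0 := by
        rw [h0, ht0] at hspec; linarith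
      refine ⟨1, le_rfl, hN c.1, ?_, ?_⟩
      · simp only [Nat.sub_self, ht0, hp]; exact le_rfl
      · rw [hp]
        have := hmono' c.1 1 0 (by omega) (hN c.1)
        rw [ht0] at this; exact this
    · refine ⟨Nat.find hex, hpos, hj0N, ?_, hspec⟩
      have hmin := Nat.find_min hex (show Nat.find hex - 1 < Nat.find hex by omega)
      push_neg at hmin
      exact hmin.le
  choose! j hj1 hj2 hj3 hj4 using hseg
  let A : τ × ℝ → τ × ℝ := fun c => (c.1, t c.1 (j c - 1))
  let B : τ × ℝ → τ × ℝ := fun c => (c.1, t c.1 (j c))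
  -- convexity: each f i c is dominated by a convex combination of f i (A c), f i (B c)
  have hlam : ∀ c ∈ Q, ∃ lam, 0 ≤ lam ∧ lam ≤ 1 ∧
      ∀ i, f i c ≤ lam * f i (A c) + (1 - lam) * f i (B c) := by
    intro c hc
    set T := c.1
    set p := c.2
    set a := t T (j c - 1) with ha
    set b := t T (j c) with hb
    have hap : a ≤ p := hj3 c hc
    have hpb : p ≤ b := hj4 c hc
    have hab : a ≤ b := hap.trans hpb
    have ha0 : 0 ≤ a := by
      have := hmono' T (j c - 1) 0 (Nat.zero_le _)
        (by show j c - 1 ≤ N c.1; have := hj2 c hc; omega)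
      rw [ht0] at this; exact this
    have hbN : b ≤ pbar T := by
      have := hmono' T (N T) (j c) (hj2 c hc) le_rfl
      rw [htN] at this; exact this
    obtain ⟨α, β, hαβ⟩ := hh T (j c) (hj1 c hc) (hj2 c hc)
    rcases eq_or_lt_of_le hab with he | hlt
    · -- degenerate segment: a = p = b
      have hpa : p = a := le_antisymm (he ▸ hpb) hap
      refine ⟨1, zero_le_one, le_rfl, fun i => ?_⟩
      have hAc : f i (A c) = f i c := by
        simp only [f, A]
        rw [← ha, ← hpa]
      rw [hAc]; ring_nf; exact le_rfl
    · set lam := (b - p) / (b - a) with hlamdef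
      have hba : 0 < b - a := by linarith
      have hl0 : 0 ≤ lam := div_nonneg (by linarith) (by linarith)
      have hl1 : lam ≤ 1 := by
        rw [div_le_one hba]; linarith
      have hcomb : lam * a + (1 - lam) * b = p := by
        have key : lam * (b - a) = b - p := by
          rw [hlamdef]; exact div_mul_cancel₀ _ (ne_of_gt hba)
        linear_combination (-1 : ℝ) * key
      refine ⟨lam, hl0, hl1, fun i => ?_⟩
      have hha : h T a = α * a + β := hαβ a ⟨le_rfl, hab⟩
      have hhb : h T b = α * b + β := hαβ b ⟨hab, le_rfl⟩
      have hhp : h T p = α * p + β := hαβ p ⟨hap, hpb⟩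
      have hhconv : h T p = lam * h T a + (1 - lam) * h T b := by
        rw [hha, hhb, hhp]
        linear_combination α * hcomb.symm
      have hgconv : g i T p ≤ lam * g i T a + (1 - lam) * g i T b := by
        have hμ0 : (0:ℝ) ≤ 1 - lam := by linarith
        have hsum : lam + (1 - lam) = 1 := by ring
        have := (hg i T).2 ⟨ha0, hab.trans hbN⟩ ⟨ha0.trans hab, hbN⟩ hl0 hμ0 hsum
        simp only [smul_eq_mul] at this
        rwa [hcomb] at this
      have : f i c = h T p + g i T p := rfl
      have hfa : f i (A c) = h T a + g i T a := rfl
      have hfb : f i (B c) = h T b + g i T b := rfl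
      rw [this, hfa, hfb]
      nlinarith [hgconv, hhconv]
  choose! lam hl0 hl1 hlle using hlam
  -- argmax selection
  have hσ : ∀ i, ∃ c, c ∈ Q ∧ Q.sup' hQ (f i) = f i c := by
    intro i
    obtain ⟨c, hc, hceq⟩ := Finset.exists_mem_eq_sup' hQ (f i)
    exact ⟨c, hc, hceq⟩
  choose σ hσQ hσeq using hσ
  let fib : τ × ℝ → Finset I := fun c => Finset.univ.filter (fun i => σ i = c)
  let φ : τ × ℝ → τ × ℝ := fun c =>
    if (∑ i ∈ fib c, w i * f i (B c)) ≤ (∑ i ∈ fib c, w i * f i (A c)) then A c else B c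
  refine ⟨Q.image φ, hQ.image φ, ?_, Finset.card_image_le, ?_⟩
  · intro c' hc'
    obtain ⟨c, hc, rfl⟩ := Finset.mem_image.mp hc'
    by_cases hif : (∑ i ∈ fib c, w i * f i (B c)) ≤ (∑ i ∈ fib c, w i * f i (A c))
    · have hφ : φ c = A c := if_pos hif
      rw [hφ]
      exact ⟨j c - 1, by show j c - 1 ≤ N c.1; have := hj2 c hc; omega, rfl⟩
    · have hφ : φ c = B c := if_neg hif
      rw [hφ]
      exact ⟨j c, hj2 c hc, rfl⟩
  · show ∑ i, w i * Q.sup' hQ (f i) ≤ ∑ i, w i * (Q.image φ).sup' (hQ.image φ) (f i)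
    have hfib : ∀ (F : I → ℝ), ∑ c ∈ Q, ∑ i ∈ fib c, F i = ∑ i, F i := by
      intro F
      exact Finset.sum_fiberwise_of_maps_to (fun i _ => hσQ i) F
    calc ∑ i, w i * Q.sup' hQ (f i)
        = ∑ i, w i * f i (σ i) := by
          refine Finset.sum_congr rfl fun i _ => ?_
          rw [hσeq i]
      _ = ∑ c ∈ Q, ∑ i ∈ fib c, w i * f i (σ i) := (hfib _).symm
      _ ≤ ∑ c ∈ Q, ∑ i ∈ fib c, w i * f i (φ c) := by
          refine Finset.sum_le_sum fun c hc => ?_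
          have hstep1 : ∑ i ∈ fib c, w i * f i (σ i) = ∑ i ∈ fib c, w i * f i c := by
            refine Finset.sum_congr rfl fun i hi => ?_
            have : σ i = c := (Finset.mem_filter.mp hi).2
            rw [this]
          rw [hstep1]
          have hstep2 : ∑ i ∈ fib c, w i * f i c ≤
              lam c * (∑ i ∈ fib c, w i * f i (A c)) +
              (1 - lam c) * (∑ i ∈ fib c, w i * f i (B c)) := by
            rw [Finset.mul_sum, Finset.mul_sum, ← Finset.sum_add_distrib]
            refine Finset.sum_le_sum fun i _ => ?_
            have := mul_le_mul_of_nonneg_left (hlle c hc i) (hw i)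
            calc w i * f i c ≤ w i * (lam c * f i (A c) + (1 - lam c) * f i (B c)) := this
              _ = lam c * (w i * f i (A c)) + (1 - lam c) * (w i * f i (B c)) := by ring
          refine hstep2.trans ?_
          by_cases hif : (∑ i ∈ fib c, w i * f i (B c)) ≤ (∑ i ∈ fib c, w i * f i (A c))
          · have hφ : φ c = A c := if_pos hif
            rw [hφ]
            nlinarith [hl0 c hc, hl1 c hc]
          · have hφ : φ c = B c := if_neg hif
            rw [hφ]
            push_neg at hif
            nlinarith [hl0 c hc, hl1 c hc]
      _ ≤ ∑ c ∈ Q, ∑ i ∈ fib c, w i * (Q.image φ).sup' (hQ.image φ) (f i) := by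
          refine Finset.sum_le_sum fun c hc => Finset.sum_le_sum fun i _ => ?_
          refine mul_le_mul_of_nonneg_left ?_ (hw i)
          exact Finset.le_sup' (f i) (Finset.mem_image_of_mem φ hc)
      _ = ∑ i, w i * (Q.image φ).sup' (hQ.image φ) (f i) := hfib _
end

section
/- (Greedy query guarantee via submodularity, the (1 − ((k−1)/k)^k)-approximation invoked after Theorem 5.) Let C be a finite nonempty type, I a finite index set, w : I → ℝ≥0, and f : I → C → ℝ≥0. Define F on finite subsets of C by F(Q) = Σ_{i ∈ I} w_i · (sup of f i over Q, equal to 0 when Q = ∅). Fix k ≥ 1 and a greedy sequence Q_0 = ∅ and Q_{j+1} = insert c_j Q_j for j = 0, …, k−1, where each c_j satisfies F(insert c Q_j) ≤ F(insert c_j Q_j) for all c ∈ C. Then for every Q ⊆ C with |Q| = k, F(Q_k) ≥ (1 − (1 − 1/k)^k) · F(Q). -/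
open scoped NNReal

/-- The Expected Utility of Selection with nonnegative weights and values:
`F(Q) = Σ i, w i * sup_{c ∈ Q} f i c` (the sup over the empty set being `0`). -/
noncomputable def EUSnn {C I : Type*} [Fintype I] (w : I → ℝ≥0) (f : I → C → ℝ≥0)
    (Q : Finset C) : ℝ≥0 :=
  ∑ i, w i * Q.sup (f i)

/-- Greedy query guarantee (Nemhauser–Wolsey–Fisher): the greedily-formed size-`k`
query achieves at least a `1 - (1 - 1/k)^k` fraction of the EUS of any size-`k` query. -/
theorem greedy_EUS_guarantee {C I : Type*} [Fintype C] [Nonempty C] [DecidableEq C]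
    [Fintype I] (w : I → ℝ≥0) (f : I → C → ℝ≥0)
    (k : ℕ) (hk : 1 ≤ k)
    (Q : ℕ → Finset C) (c : ℕ → C)
    (hQ0 : Q 0 = ∅)
    (hstep : ∀ j < k, Q (j + 1) = insert (c j) (Q j))
    (hgreedy : ∀ j < k, ∀ c' : C,
      EUSnn w f (insert c' (Q j)) ≤ EUSnn w f (insert (c j) (Q j))) :
    ∀ Qopt : Finset C, Qopt.card = k →
      (1 - (1 - 1 / (k : ℝ)) ^ k) * (EUSnn w f Qopt : ℝ) ≤ (EUSnn w f (Q k) : ℝ) := by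
  intro Qopt hcard
  have hk0 : (0:ℝ) < k := by exact_mod_cast Nat.lt_of_lt_of_le Nat.zero_lt_one hk
  have hQne : Qopt.Nonempty := Finset.card_pos.mp (by rw [hcard]; exact hk)
  set V : ℝ := (EUSnn w f Qopt : ℝ) with hV
  set g : ℕ → ℝ := fun j => (EUSnn w f (Q j) : ℝ) with hg
  have expand : ∀ (S : Finset C), (EUSnn w f S : ℝ) = ∑ i, (w i : ℝ) * ((S.sup (f i) : ℝ≥0) : ℝ) := by
    intro S; simp [EUSnn, NNReal.coe_sum]
  -- key inequality
  have key : ∀ j, j < k → V ≤ g j + (k : ℝ) * (g (j+1) - g j) := by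
    intro j hj
    have h1 : V ≤ g j + ∑ cc ∈ Qopt, ((EUSnn w f (insert cc (Q j)) : ℝ) - g j) := by
      have hre : g j + ∑ cc ∈ Qopt, ((EUSnn w f (insert cc (Q j)) : ℝ) - g j)
          = ∑ i, ((w i : ℝ) * (((Q j).sup (f i) : ℝ≥0) : ℝ)
              + ∑ cc ∈ Qopt, ((w i : ℝ) * (((insert cc (Q j)).sup (f i) : ℝ≥0) : ℝ)
                  - (w i : ℝ) * (((Q j).sup (f i) : ℝ≥0) : ℝ))) := by
        simp only [hg, expand]
        rw [show (∑ cc ∈ Qopt, ((∑ i, (w i : ℝ) * (((insert cc (Q j)).sup (f i) : ℝ≥0) : ℝ))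
              - ∑ i, (w i : ℝ) * (((Q j).sup (f i) : ℝ≥0) : ℝ)))
            = ∑ cc ∈ Qopt, ∑ i, ((w i : ℝ) * (((insert cc (Q j)).sup (f i) : ℝ≥0) : ℝ)
                - (w i : ℝ) * (((Q j).sup (f i) : ℝ≥0) : ℝ)) from
          Finset.sum_congr rfl fun cc _ => (Finset.sum_sub_distrib _ _).symm]
        rw [Finset.sum_comm]
        exact (Finset.sum_add_distrib).symm
      rw [hV, expand, hre]
      apply Finset.sum_le_sum
      intro i _
      set t : ℝ := (((Q j).sup (f i) : ℝ≥0) : ℝ) with ht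
      obtain ⟨cs, hcs, hsup⟩ := Finset.exists_mem_eq_sup Qopt hQne (f i)
      have hterm_nonneg : ∀ cc ∈ Qopt,
          0 ≤ (w i : ℝ) * (((insert cc (Q j)).sup (f i) : ℝ≥0) : ℝ) - (w i : ℝ) * t := by
        intro cc _
        have : (Q j).sup (f i) ≤ (insert cc (Q j)).sup (f i) :=
          Finset.sup_mono (Finset.subset_insert _ _)
        have h' : t ≤ (((insert cc (Q j)).sup (f i) : ℝ≥0) : ℝ) := by exact_mod_cast this
        nlinarith [(w i).coe_nonneg]
      have hcs_big : (w i : ℝ) * ((Qopt.sup (f i) : ℝ≥0) : ℝ) - (w i : ℝ) * t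
          ≤ (w i : ℝ) * (((insert cs (Q j)).sup (f i) : ℝ≥0) : ℝ) - (w i : ℝ) * t := by
        have : Qopt.sup (f i) ≤ (insert cs (Q j)).sup (f i) := by
          rw [hsup]; exact Finset.le_sup (Finset.mem_insert_self _ _)
        have h' : ((Qopt.sup (f i) : ℝ≥0) : ℝ) ≤ (((insert cs (Q j)).sup (f i) : ℝ≥0) : ℝ) := by
          exact_mod_cast this
        nlinarith [(w i).coe_nonneg]
      have hsingle := Finset.single_le_sum hterm_nonneg hcs
      linarith
    have h2 : ∑ cc ∈ Qopt, ((EUSnn w f (insert cc (Q j)) : ℝ) - g j)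
        ≤ ∑ _cc ∈ Qopt, (g (j+1) - g j) := by
      apply Finset.sum_le_sum
      intro cc _
      have := hgreedy j hj cc
      have h' : (EUSnn w f (insert cc (Q j)) : ℝ) ≤ (EUSnn w f (insert (c j) (Q j)) : ℝ) := by
        exact_mod_cast this
      have heq : g (j+1) = (EUSnn w f (insert (c j) (Q j)) : ℝ) := by
        rw [hg]; simp [hstep j hj]
      linarith
    rw [Finset.sum_const, hcard, nsmul_eq_mul] at h2
    linarith
  -- deficit induction
  have hδ : ∀ j, j ≤ k → V - g j ≤ (1 - 1 / (k:ℝ)) ^ j * V := by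
    intro j
    induction j with
    | zero =>
      intro _
      have hg0 : g 0 = 0 := by rw [hg]; simp [hQ0, EUSnn]
      simp [hg0]
    | succ j ih =>
      intro hj1
      have hjk : j < k := Nat.lt_of_succ_le hj1
      have hkey := key j hjk
      have hfac : (0:ℝ) ≤ 1 - 1 / (k:ℝ) := by
        have : 1 / (k:ℝ) ≤ 1 := by
          rw [div_le_one hk0]; exact_mod_cast hk
        linarith
      have hstep1 : V - g (j+1) ≤ (1 - 1 / (k:ℝ)) * (V - g j) := by
        have h3 : (1/(k:ℝ)) * (V - g j) ≤ (1/(k:ℝ)) * ((k:ℝ) * (g (j+1) - g j)) := by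
          apply mul_le_mul_of_nonneg_left (by linarith) (by positivity)
        rw [one_div, inv_mul_cancel_left₀ hk0.ne'] at h3
        have h4 : (1 - 1/(k:ℝ)) * (V - g j) = (V - g j) - (k:ℝ)⁻¹ * (V - g j) := by
          rw [one_div]; ring
        linarith
      calc V - g (j+1) ≤ (1 - 1 / (k:ℝ)) * (V - g j) := hstep1
        _ ≤ (1 - 1 / (k:ℝ)) * ((1 - 1 / (k:ℝ)) ^ j * V) :=
            mul_le_mul_of_nonneg_left (ih (Nat.le_of_succ_le hj1)) hfac
        _ = (1 - 1 / (k:ℝ)) ^ (j+1) * V := by ring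
  have hfinal := hδ k le_rfl
  have : (1 - (1 - 1 / (k:ℝ)) ^ k) * V = V - (1 - 1 / (k:ℝ)) ^ k * V := by ring
  rw [this]
  linarith
end
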